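/- arXiv:1310.4555 — 2 statements merged into one kernel-verified Lean document; each statement's English description precedes it below -/
import Mathlib

section
/- For the particle interaction system where the probability of selecting the pair (k,l) is proportional to 1/(x_k x_l)^α and updated states are drawn uniformly and independently from (0,1), the distribution π_Γ ∝ (x_1 ⋯ x_N)^α · ∑_{i,j} 1/(x_i x_j)^α satisfies the detailed balance condition π_Γ P(Γ'|Γ) = π_{Γ'} P(Γ|Γ') for any two configurations Γ, Γ' differing only in coordinates k and l. -/
open Finset

lemma sum_pos_aux {N : ℕ} (x : Fin N → ℝ) (α : ℝ)
    (hx : ∀ i, 0 < x i) (k l : Fin N) (hkl : k ≠ l) :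
    0 < ∑ i, ∑ j ∈ univ \ {i}, (x i * x j : ℝ) ^ (-α) := by
  have hnn : ∀ i j : Fin N, (0:ℝ) ≤ (x i * x j) ^ (-α) :=
    fun i j => Real.rpow_nonneg (mul_nonneg (hx i).le (hx j).le) _
  apply Finset.sum_pos'
  · intro i _
    exact Finset.sum_nonneg fun j _ => hnn i j
  · refine ⟨k, Finset.mem_univ k, ?_⟩
    apply Finset.sum_pos'
    · intro j _; exact hnn k j
    · exact ⟨l, by simp [hkl.symm], Real.rpow_pos_of_pos (mul_pos (hx k) (hx l)) _⟩

/-- Detailed balance for the particle interaction system. -/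
theorem stmt_9 (N : ℕ) (α Z : ℝ) (hα : 0 < α) (hα1 : α < 1) (hZ : 0 < Z)
    (x y : Fin N → ℝ)
    (hx : ∀ i, x i ∈ Set.Ioo (0 : ℝ) 1) (hy : ∀ i, y i ∈ Set.Ioo (0 : ℝ) 1)
    (k l : Fin N) (hkl : k ≠ l)
    (hagree : ∀ i, i ≠ k → i ≠ l → x i = y i) :
    ((∏ i, x i ^ α) * (∑ i, ∑ j ∈ univ \ {i}, (x i * x j) ^ (-α)) / Z) *
        ((x k * x l) ^ (-α) / (∑ i, ∑ j ∈ univ \ {i}, (x i * x j) ^ (-α)))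
      = ((∏ i, y i ^ α) * (∑ i, ∑ j ∈ univ \ {i}, (y i * y j) ^ (-α)) / Z) *
        ((y k * y l) ^ (-α) / (∑ i, ∑ j ∈ univ \ {i}, (y i * y j) ^ (-α))) := by
  have hxp : ∀ i, 0 < x i := fun i => (hx i).1
  have hyp : ∀ i, 0 < y i := fun i => (hy i).1
  have hSx := sum_pos_aux x α hxp k l hkl
  have hSy := sum_pos_aux y α hyp k l hkl
  have key : (∏ i, x i ^ α) * (x k * x l) ^ (-α)
      = (∏ i, y i ^ α) * (y k * y l) ^ (-α) := by
    have hsplit : ∀ z : Fin N → ℝ, (∀ i, 0 < z i) →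
        (∏ i, z i ^ α) * (z k * z l) ^ (-α)
          = ∏ i ∈ univ \ {k, l}, z i ^ α := by
      intro z hz
      have hmem : l ∈ (univ \ {k} : Finset (Fin N)) := by simp [hkl.symm]
      rw [Finset.prod_eq_prod_diff_singleton_mul (Finset.mem_univ k) (fun i => z i ^ α),
        Finset.prod_eq_prod_diff_singleton_mul hmem (fun i => z i ^ α),
        Real.mul_rpow (hz k).le (hz l).le, Real.rpow_neg (hz k).le, Real.rpow_neg (hz l).le]
      have h1 : (univ \ {k}) \ {l} = univ \ ({k, l} : Finset (Fin N)) := by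
        ext i; simp
      rw [h1]
      have hk : z k ^ α ≠ 0 := (Real.rpow_pos_of_pos (hz k) α).ne'
      have hl : z l ^ α ≠ 0 := (Real.rpow_pos_of_pos (hz l) α).ne'
      field_simp
    rw [hsplit x hxp, hsplit y hyp]
    apply Finset.prod_congr rfl
    intro i hi
    simp only [Finset.mem_sdiff, Finset.mem_insert, Finset.mem_singleton] at hi
    rw [hagree i (fun h => hi.2 (Or.inl h)) (fun h => hi.2 (Or.inr h))]
  have reduce : ∀ (A S t : ℝ), S ≠ 0 → (A * S / Z) * (t / S) = A * t / Z := by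
    intro A S t hS; field_simp
  rw [reduce _ _ _ hSx.ne', reduce _ _ _ hSy.ne', div_eq_div_iff hZ.ne' hZ.ne', key]
end

section
/- For g(x_1,…,x_N) = x_1² + ⋯ + x_N², the expectation under the stationary distribution π equals E[g] = ((α+1)/(α+3))·(N−2) + 2/3. -/
open MeasureTheory Finset

lemma L_rpow {r : ℝ} (hr : -1 < r) : ∫ x in Set.Ioo (0:ℝ) 1, x ^ r = (r+1)⁻¹ := by
  have h1 : ∫ x in (0:ℝ)..1, x ^ r = (r+1)⁻¹ := by
    rw [integral_rpow (Or.inl hr), Real.one_rpow, Real.zero_rpow (by linarith)]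
    ring
  rw [← h1, intervalIntegral.integral_of_le zero_le_one,
    setIntegral_congr_set Ioo_ae_eq_Ioc]

lemma Int_rpow {r : ℝ} (hr : -1 < r) : IntegrableOn (fun x : ℝ => x ^ r) (Set.Ioo 0 1) := by
  have := (intervalIntegral.intervalIntegrable_rpow' (a := 0) (b := 1) hr)
  rwa [intervalIntegrable_iff_integrableOn_Ioo_of_le zero_le_one] at this

lemma L_sq : ∫ x in Set.Ioo (0:ℝ) 1, x ^ 2 = 3⁻¹ := by
  have h1 : ∫ x in (0:ℝ)..1, x ^ 2 = 3⁻¹ := by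
    rw [integral_pow]; norm_num
  rw [← h1, intervalIntegral.integral_of_le zero_le_one,
    setIntegral_congr_set Ioo_ae_eq_Ioc]

lemma Int_sq : IntegrableOn (fun x : ℝ => x ^ 2) (Set.Ioo (0:ℝ) 1) := by
  have := (intervalIntegral.intervalIntegrable_pow 2 (a := (0:ℝ)) (b := 1) (μ := volume))
  rwa [intervalIntegrable_iff_integrableOn_Ioo_of_le zero_le_one] at this

lemma L_sq_rpow {r : ℝ} (hr : -1 < r) :
    ∫ x in Set.Ioo (0:ℝ) 1, x ^ 2 * x ^ r = (r+3)⁻¹ := by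
  have hc : ∀ x ∈ Set.Ioo (0:ℝ) 1, x ^ 2 * x ^ r = x ^ (r + 2) := by
    intro x hx
    rw [Real.rpow_add hx.1, ← Real.rpow_natCast x 2]
    push_cast; ring
  rw [setIntegral_congr_fun measurableSet_Ioo hc, L_rpow (by linarith)]
  ring_nf

lemma Int_sq_rpow {r : ℝ} (hr : -1 < r) :
    IntegrableOn (fun x : ℝ => x ^ 2 * x ^ r) (Set.Ioo (0:ℝ) 1) := by
  have hc : ∀ x ∈ Set.Ioo (0:ℝ) 1, x ^ (r+2) = x ^ 2 * x ^ r := by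
    intro x hx
    rw [Real.rpow_add hx.1, ← Real.rpow_natCast x 2]
    push_cast; ring
  exact (Int_rpow (by linarith : (-1:ℝ) < r + 2)).congr_fun hc measurableSet_Ioo

lemma L_one : ∫ _x in Set.Ioo (0:ℝ) 1, (1:ℝ) = 1 := by simp

lemma Int_one : IntegrableOn (fun _ : ℝ => (1:ℝ)) (Set.Ioo (0:ℝ) 1) := by
  simp [integrableOn_const]

lemma pair_count (N : ℕ) : ∑ i : Fin N, #(univ.filter (fun j => i < j)) = N.choose 2 := by
  have h1 : ∀ i : Fin N, univ.filter (fun j => i < j) = Finset.Ioi i := by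
    intro i; ext j; simp
  simp_rw [h1, Fin.card_Ioi]
  rw [Fin.sum_univ_eq_sum_range (fun k => N - 1 - k), Nat.choose_two_right,
    ← Finset.sum_range_reflect]
  rw [Finset.sum_congr rfl (fun j hj => by
    rw [Finset.mem_range] at hj; omega : ∀ j ∈ Finset.range N, N - 1 - (N - 1 - j) = j)]
  exact Finset.sum_range_id N

theorem my_integrable_pi {n : ℕ} {μ : Measure ℝ} [SigmaFinite μ] {f : Fin n → ℝ → ℝ}
    (hf : ∀ i, Integrable (f i) μ) :
    Integrable (fun x : Fin n → ℝ => ∏ i, f i (x i)) (Measure.pi fun _ => μ) := by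
  induction n with
  | zero =>
    simp [integrable_const_iff, Measure.pi_empty_univ]
    rw [Measure.pi_of_empty]; infer_instance
  | succ n n_ih =>
      have := ((measurePreserving_piFinSuccAbove (fun _ : Fin (n+1) => μ) 0).symm)
      rw [← this.integrable_comp_emb (MeasurableEquiv.measurableEmbedding _)]
      simp_rw [MeasurableEquiv.piFinSuccAbove_symm_apply, Fin.insertNthEquiv,
        Fin.prod_univ_succ, Fin.insertNth_zero]
      simp only [Fin.zero_succAbove, Function.comp_def, Fin.cons_zero, Fin.cons_succ]
      have h2 : Integrable (fun (x : Fin n → ℝ) ↦ ∏ j, f (Fin.succ j) (x j))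
          (Measure.pi fun _ => μ) := n_ih (fun i ↦ hf _)
      exact Integrable.mul_prod (hf 0) h2

theorem my_integral_pi {n : ℕ} (μ : Measure ℝ) [SigmaFinite μ] (f : Fin n → ℝ → ℝ) :
    ∫ x : Fin n → ℝ, ∏ i, f i (x i) ∂Measure.pi (fun _ => μ) = ∏ i, ∫ x, f i x ∂μ := by
  induction n with
  | zero =>
    simp [Measure.pi_empty_univ]
    rw [Measure.pi_of_empty]; simp
  | succ n n_ih =>
      calc
        _ = ∫ x : ℝ × (Fin n → ℝ),
            f 0 x.1 * ∏ i : Fin n, f (Fin.succ i) (x.2 i) ∂(μ.prod (Measure.pi fun _ => μ)) := by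
          rw [← ((measurePreserving_piFinSuccAbove
            (fun _ : Fin (n+1) => μ) 0).symm).integral_comp']
          simp only [MeasurableEquiv.piFinSuccAbove_symm_apply, Fin.insertNthEquiv,
            Fin.prod_univ_succ, Fin.insertNth_zero, Equiv.coe_fn_mk, Fin.cons_succ,
            Fin.zero_succAbove, Fin.cons_zero, cast_eq]
        _ = (∫ x, f 0 x ∂μ) * ∏ i : Fin n, ∫ x, f (Fin.succ i) x ∂μ := by
          rw [← n_ih, ← integral_prod_mul]
        _ = ∏ i, ∫ x, f i x ∂μ := by rw [Fin.prod_univ_succ]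

lemma restrict_pi_Ioo (N : ℕ) :
    ((Measure.pi fun _ : Fin N => (volume : Measure ℝ)).restrict
        (Set.univ.pi fun _ => Set.Ioo 0 1))
      = Measure.pi (fun _ : Fin N => volume.restrict (Set.Ioo 0 1)) := by
  symm
  apply Measure.pi_eq
  intro s hs
  rw [Measure.restrict_apply (MeasurableSet.univ_pi hs), ← Set.pi_inter_distrib,
    Measure.pi_pi]
  exact Finset.prod_congr rfl fun i _ => (Measure.restrict_apply (hs i)).symm

/-- E[x_1² + ⋯ + x_N²] = ((α+1)/(α+3))(N−2) + 2/3 under the stationary distribution. -/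
theorem stmt_12 (N : ℕ) (hN : 2 ≤ N) (α : ℝ) (hα : 0 < α) (hα1 : α < 1) :
    ((α + 1) ^ (N - 2) / (N.choose 2 : ℝ)) *
        ∫ x in Set.univ.pi (fun _ : Fin N => Set.Ioo (0 : ℝ) 1),
          (∑ m, x m ^ 2) * ((∏ i, x i ^ α) *
            (∑ i, ∑ j ∈ univ.filter (fun j => i < j), (x i * x j) ^ (-α)))
      = ((α + 1) / (α + 3)) * ((N : ℝ) - 2) + 2 / 3 := by
  have hαm : (-1:ℝ) < α := by linarith
  set μ : Measure ℝ := volume.restrict (Set.Ioo 0 1) with hμ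
  set f : Fin N → Fin N → Fin N → Fin N → ℝ → ℝ :=
    fun i j m k x => (if k = m then x ^ 2 else 1) * (if k = i ∨ k = j then 1 else x ^ α)
    with hf
  -- integrability of each coordinate function
  have hint1 : ∀ i j m k, Integrable (f i j m k) μ := by
    intro i j m k
    by_cases hm : k = m
    · subst hm
      by_cases hij : k = i ∨ k = j
      · simp only [hf, if_pos rfl, if_pos hij, mul_one]
        exact Int_sq
      · simp only [hf, if_pos rfl, if_neg hij]
        exact Int_sq_rpow hαm
    · by_cases hij : k = i ∨ k = j
      · simp only [hf, if_neg hm, if_pos hij, one_mul]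
        exact Int_one
      · simp only [hf, if_neg hm, if_neg hij, one_mul]
        exact Int_rpow hαm
  -- value of each coordinate integral
  have hval : ∀ i j m k, (∫ x, f i j m k x ∂μ)
      = if k = m then (if k = i ∨ k = j then 3⁻¹ else (α+3)⁻¹)
        else (if k = i ∨ k = j then 1 else (α+1)⁻¹) := by
    intro i j m k
    by_cases hm : k = m
    · subst hm
      by_cases hij : k = i ∨ k = j
      · simp only [hf, if_pos rfl, if_pos hij, mul_one]
        exact L_sq
      · simp only [hf, if_pos rfl, if_neg hij]
        exact L_sq_rpow hαm
    · by_cases hij : k = i ∨ k = j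
      · simp only [hf, if_neg hm, if_pos hij, one_mul]
        exact L_one
      · simp only [hf, if_neg hm, if_neg hij, one_mul]
        exact L_rpow hαm
  -- pointwise identity on the cube
  have hpt : ∀ x ∈ Set.univ.pi (fun _ : Fin N => Set.Ioo (0 : ℝ) 1),
      (∑ m, x m ^ 2) * ((∏ i, x i ^ α) *
          (∑ i, ∑ j ∈ univ.filter (fun j => i < j), (x i * x j) ^ (-α)))
        = ∑ i, ∑ j ∈ univ.filter (fun j => i < j), ∑ m, ∏ k, f i j m k (x k) := by
    intro x hx
    have hx' : ∀ k, 0 < x k ∧ x k < 1 := by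
      intro k; exact (hx k (Set.mem_univ k) : x k ∈ Set.Ioo (0:ℝ) 1)
    simp_rw [Finset.mul_sum]
    refine Finset.sum_congr rfl fun i _ => Finset.sum_congr rfl fun j hj => ?_
    have hij : i < j := (Finset.mem_filter.mp hj).2
    have hne : i ≠ j := ne_of_lt hij
    have hP : (∏ k, x k ^ α) * (x i * x j) ^ (-α)
        = ∏ k ∈ univ.filter (fun k => ¬(k = i ∨ k = j)), x k ^ α := by
      have h2 : univ.filter (fun k : Fin N => k = i ∨ k = j) = {i, j} := by
        ext k; simp
      rw [← Finset.prod_filter_mul_prod_filter_not univ (fun k => k = i ∨ k = j)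
        (fun k => x k ^ α), h2, Finset.prod_pair hne,
        Real.mul_rpow (hx' i).1.le (hx' j).1.le]
      have hone : ∀ k, x k ^ α * x k ^ (-α) = 1 := by
        intro k; rw [← Real.rpow_add (hx' k).1]; simp
      calc (x i ^ α * x j ^ α * ∏ k ∈ univ.filter (fun k => ¬(k = i ∨ k = j)), x k ^ α)
            * (x i ^ (-α) * x j ^ (-α))
          = (x i ^ α * x i ^ (-α)) * ((x j ^ α * x j ^ (-α)) *
              ∏ k ∈ univ.filter (fun k => ¬(k = i ∨ k = j)), x k ^ α) := by ring
        _ = _ := by rw [hone i, hone j]; ring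
    rw [hP, Finset.sum_mul]
    refine Finset.sum_congr rfl fun m _ => ?_
    rw [hf]
    rw [Finset.prod_mul_distrib, Finset.prod_ite_eq' univ m (fun k => x k ^ 2),
      Finset.prod_ite (fun _ => (1:ℝ)) (fun k => x k ^ α), Finset.prod_const_one, one_mul]
    simp [mul_comm]
  -- rewrite the integral
  rw [setIntegral_congr_fun (MeasurableSet.univ_pi fun _ => measurableSet_Ioo) hpt]
  have hμpi : (volume : Measure (Fin N → ℝ)).restrict
        (Set.univ.pi (fun _ : Fin N => Set.Ioo (0 : ℝ) 1))
      = Measure.pi (fun _ : Fin N => μ) := by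
    rw [hμ, volume_pi]
    exact restrict_pi_Ioo N
  rw [show (∫ x in Set.univ.pi (fun _ : Fin N => Set.Ioo (0 : ℝ) 1),
      ∑ i, ∑ j ∈ univ.filter (fun j => i < j), ∑ m, ∏ k, f i j m k (x k))
      = ∫ x, (∑ i, ∑ j ∈ univ.filter (fun j => i < j), ∑ m, ∏ k, f i j m k (x k))
        ∂Measure.pi (fun _ : Fin N => μ) from by rw [← hμpi]]
  have hintp : ∀ i j m, Integrable (fun x : Fin N → ℝ => ∏ k, f i j m k (x k))
      (Measure.pi (fun _ : Fin N => μ)) := fun i j m => my_integrable_pi (hint1 i j m)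
  rw [integral_finset_sum _ (fun i _ => integrable_finset_sum _ fun j _ =>
    integrable_finset_sum _ fun m _ => hintp i j m)]
  have hswap : ∀ i : Fin N, (∫ x, (∑ j ∈ univ.filter (fun j => i < j), ∑ m,
        ∏ k, f i j m k (x k)) ∂Measure.pi (fun _ : Fin N => μ))
      = ∑ j ∈ univ.filter (fun j => i < j), ∑ m, ∏ k, (∫ x, f i j m k x ∂μ) := by
    intro i
    rw [integral_finset_sum _ (fun j _ => integrable_finset_sum _ fun m _ => hintp i j m)]
    refine Finset.sum_congr rfl fun j _ => ?_
    rw [integral_finset_sum _ (fun m _ => hintp i j m)]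
    exact Finset.sum_congr rfl fun m _ => my_integral_pi μ _
  simp_rw [hswap]
  -- evaluate the product of coordinate integrals
  have hprod : ∀ i j m : Fin N, i ≠ j → (∏ k, (∫ x, f i j m k x ∂μ))
      = if m = i ∨ m = j then 3⁻¹ * ((α+1)⁻¹)^(N-2) else (α+3)⁻¹ * ((α+1)⁻¹)^(N-3) := by
    intro i j m hne
    simp_rw [hval]
    rw [← Finset.mul_prod_erase univ _ (Finset.mem_univ m)]
    have hB : ∀ k ∈ univ.erase m,
        (if k = m then (if k = i ∨ k = j then (3:ℝ)⁻¹ else (α+3)⁻¹)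
          else (if k = i ∨ k = j then 1 else (α+1)⁻¹))
        = (if k = i ∨ k = j then 1 else (α+1)⁻¹) := by
      intro k hk
      rw [if_neg (Finset.ne_of_mem_erase hk)]
    rw [Finset.prod_congr rfl hB, if_pos rfl,
      Finset.prod_ite (fun _ => (1:ℝ)) (fun _ => (α+1)⁻¹), Finset.prod_const_one, one_mul,
      Finset.prod_const]
    have hfe : (univ.erase m).filter (fun k : Fin N => ¬(k = i ∨ k = j))
        = (univ.filter (fun k : Fin N => ¬(k = i ∨ k = j))).erase m := by
      ext k; simp [and_comm]
    have hcard2 : (univ.filter (fun k : Fin N => ¬(k = i ∨ k = j))).card = N - 2 := by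
      rw [Finset.filter_not, Finset.card_sdiff_of_subset (Finset.filter_subset _ _)]
      have h2 : univ.filter (fun k : Fin N => k = i ∨ k = j) = {i, j} := by ext k; simp
      rw [h2, Finset.card_pair hne, Finset.card_univ, Fintype.card_fin]
    by_cases hm : m = i ∨ m = j
    · have hc : ((univ.erase m).filter (fun k : Fin N => ¬(k = i ∨ k = j))).card = N - 2 := by
        rw [hfe, Finset.erase_eq_of_notMem (by simp only [Finset.mem_filter, Finset.mem_univ, true_and, not_not]; exact hm), hcard2]
      simp only [hc, if_pos hm]
    · have hmem : m ∈ univ.filter (fun k : Fin N => ¬(k = i ∨ k = j)) := by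
        simpa using hm
      have hc : ((univ.erase m).filter (fun k : Fin N => ¬(k = i ∨ k = j))).card = N - 3 := by
        rw [hfe, Finset.card_erase_of_mem hmem, hcard2]; omega
      simp only [hc, if_neg hm]
  -- sum over m
  have hsumm : ∀ i j : Fin N, i ≠ j → (∑ m, ∏ k, (∫ x, f i j m k x ∂μ))
      = 2 * (3⁻¹ * ((α+1)⁻¹)^(N-2)) + (N-2 : ℕ) * ((α+3)⁻¹ * ((α+1)⁻¹)^(N-3)) := by
    intro i j hne
    rw [Finset.sum_congr rfl (fun m _ => hprod i j m hne), Finset.sum_ite,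
      Finset.sum_const, Finset.sum_const]
    have h2 : univ.filter (fun m : Fin N => m = i ∨ m = j) = {i, j} := by ext k; simp
    have hcard2 : (univ.filter (fun m : Fin N => ¬(m = i ∨ m = j))).card = N - 2 := by
      rw [Finset.filter_not, Finset.card_sdiff_of_subset (Finset.filter_subset _ _), h2,
        Finset.card_pair hne, Finset.card_univ, Fintype.card_fin]
    rw [h2, Finset.card_pair hne, hcard2, nsmul_eq_mul, nsmul_eq_mul]
    push_cast
    ring
  -- sum over pairs
  have hpairs : (∑ i : Fin N, ∑ j ∈ univ.filter (fun j => i < j), ∑ m,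
        ∏ k, (∫ x, f i j m k x ∂μ))
      = (N.choose 2 : ℝ) * (2 * (3⁻¹ * ((α+1)⁻¹)^(N-2))
          + (N-2 : ℕ) * ((α+3)⁻¹ * ((α+1)⁻¹)^(N-3))) := by
    rw [Finset.sum_congr rfl (fun i _ => Finset.sum_congr rfl (fun j hj =>
      hsumm i j (ne_of_lt (Finset.mem_filter.mp hj).2)))]
    simp_rw [Finset.sum_const, nsmul_eq_mul]
    rw [← Finset.sum_mul, ← Nat.cast_sum, pair_count]
  rw [hpairs]
  -- final algebra
  have hchoose : (0:ℝ) < (N.choose 2 : ℝ) := by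
    exact_mod_cast Nat.choose_pos hN
  have hα1pos : (0:ℝ) < α + 1 := by linarith
  have hcancel : (α+1)^(N-2) * ((α+1)⁻¹)^(N-2) = 1 := by
    rw [← mul_pow, mul_inv_cancel₀ (ne_of_gt hα1pos), one_pow]
  rcases Nat.lt_or_ge N 3 with h3 | h3
  · interval_cases N
    norm_num
  · have hN2 : N - 2 = (N - 3) + 1 := by omega
    have hcast : ((N - 2 : ℕ) : ℝ) = (N:ℝ) - 2 := by
      push_cast [Nat.cast_sub hN]; ring
    have e2 : (α+1)^(N-2) * ((α+1)⁻¹)^(N-3) = α + 1 := by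
      have h1 : (α+1)^(N-3) * ((α+1)⁻¹)^(N-3) = 1 := by
        rw [← mul_pow, mul_inv_cancel₀ (ne_of_gt hα1pos), one_pow]
      calc (α+1)^(N-2) * ((α+1)⁻¹)^(N-3)
          = ((α+1)^(N-3) * ((α+1)⁻¹)^(N-3)) * (α+1) := by rw [hN2, pow_succ]; ring
        _ = α + 1 := by rw [h1]; ring
    rw [hcast, div_mul_eq_mul_div, div_eq_iff (ne_of_gt hchoose)]
    linear_combination ((N.choose 2 : ℝ) * 2 * 3⁻¹) * hcancel
      + ((N.choose 2 : ℝ) * ((N:ℝ)-2) * (α+3)⁻¹) * e2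
end
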